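/- For any l ∈ ℝ and t > 0 with |l| ≤ t, and X a standard Gaussian random variable, E[|l + tX| - |l|] ≥ √(2/π)·t·e^{-1/2} - 2t·(1 - Φ(1)) ≥ 0.1666·t. -/

import Mathlib

open MeasureTheory ProbabilityTheory Real Set Filter Topology NNReal ENNReal

/-- Standard Gaussian cumulative distribution function. -/
noncomputable def Phi (t : ℝ) : ℝ := ∫ x in Set.Iic t, Real.exp (-x ^ 2 / 2) / Real.sqrt (2 * Real.pi)

noncomputable def f (x : ℝ) : ℝ := Real.exp (-x ^ 2 / 2)

noncomputable def g (a : ℝ) : ℝ := 2 * f a / Real.sqrt (2 * Real.pi) - 2 * (a * (1 - Phi a))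



lemma f_pos (x : ℝ) : 0 < f x := Real.exp_pos _
lemma f_cont : Continuous f := by unfold f; fun_prop

lemma integrable_f : Integrable f := by
  have := integrable_exp_neg_mul_sq (by norm_num : (0:ℝ) < 2⁻¹)
  apply this.congr
  filter_upwards with x; unfold f; ring_nf

lemma integrable_xf : Integrable (fun x => x * f x) := by
  have := integrable_rpow_mul_exp_neg_mul_sq (by norm_num : (0:ℝ) < 2⁻¹) (by norm_num : (-1:ℝ) < 1)
  apply this.congr
  filter_upwards with x
  rw [Real.rpow_one]; unfold f; ring_nf

lemma integral_f : ∫ x, f x = Real.sqrt (2 * Real.pi) := by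
  have := integral_gaussian 2⁻¹
  rw [show Real.pi / 2⁻¹ = 2 * Real.pi by ring] at this
  rw [← this]
  congr 1 with x
  unfold f; ring_nf

lemma hasDerivAt_negf (x : ℝ) : HasDerivAt (fun y => -f y) (x * f x) x := by
  have h : HasDerivAt (fun y : ℝ => -y ^ 2 / 2) (-x) x := by
    have := ((hasDerivAt_pow 2 x).neg.div_const 2)
    refine this.congr_deriv ?_
    push_cast; ring
  have h2 := (Real.hasDerivAt_exp (-x ^ 2 / 2)).comp x h
  have h3 := h2.neg
  refine h3.congr_deriv ?_
  simp only [f, Function.comp]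
  ring

lemma pow2top : Tendsto (fun x : ℝ => x ^ 2) atTop atTop := tendsto_pow_atTop (by norm_num)

lemma sq_tendsto' : Tendsto (fun x : ℝ => -x ^ 2 / 2) atTop atBot :=
  (tendsto_neg_atTop_atBot.comp pow2top).atBot_div_const (by norm_num : (0:ℝ) < 2)

lemma sq_tendsto : Tendsto (fun x : ℝ => -x ^ 2 / 2) atBot atBot := by
  have h1 : Tendsto (fun x : ℝ => x ^ 2) atBot atTop := by
    have := pow2top.comp tendsto_neg_atBot_atTop
    apply this.congr
    intro x; simp [neg_pow]
  exact (tendsto_neg_atTop_atBot.comp h1).atBot_div_const (by norm_num : (0:ℝ) < 2)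

lemma tendsto_f_atBot : Tendsto f atBot (𝓝 0) := Real.tendsto_exp_atBot.comp sq_tendsto
lemma tendsto_f_atTop : Tendsto f atTop (𝓝 0) := Real.tendsto_exp_atBot.comp sq_tendsto'

lemma integral_xf_Iic (c : ℝ) : ∫ x in Iic c, x * f x = -f c := by
  have h := integral_Iic_of_hasDerivAt_of_tendsto'
    (f := fun y => -f y) (f' := fun x => x * f x) (a := c)
    (fun x _ => hasDerivAt_negf x) integrable_xf.integrableOn tendsto_f_atBot.neg
  simpa using h

lemma integral_xf_Ioi (c : ℝ) : ∫ x in Ioi c, x * f x = f c := by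
  have h := integral_Ioi_of_hasDerivAt_of_tendsto'
    (f := fun y => -f y) (f' := fun x => x * f x) (a := c)
    (fun x _ => hasDerivAt_negf x) integrable_xf.integrableOn tendsto_f_atTop.neg
  simpa using h

lemma sqrt2pi_pos : 0 < Real.sqrt (2 * Real.pi) := Real.sqrt_pos.2 (by positivity)

lemma Phi_eq (c : ℝ) : Phi c = (∫ x in Iic c, f x) / Real.sqrt (2 * Real.pi) := by
  unfold Phi f
  rw [integral_div]

lemma integral_f_Iic (c : ℝ) : ∫ x in Iic c, f x = Real.sqrt (2 * Real.pi) * Phi c := by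
  rw [Phi_eq]; field_simp

lemma integral_f_Ioi (c : ℝ) : ∫ x in Ioi c, f x = Real.sqrt (2 * Real.pi) * (1 - Phi c) := by
  have h := intervalIntegral.integral_Iic_add_Ioi (b := c) (f := f) (μ := volume)
    integrable_f.integrableOn integrable_f.integrableOn
  rw [integral_f] at h
  rw [integral_f_Iic] at h
  linarith [h]


lemma f_even (x : ℝ) : f (-x) = f x := by unfold f; ring_nf

lemma Phi_neg (c : ℝ) : Phi (-c) = 1 - Phi c := by
  have h1 : ∫ x in Iic (-c), f x = ∫ x in Ioi c, f x := by
    have h2 := integral_comp_neg_Iic (-c) f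
    rw [neg_neg] at h2
    rw [← h2]
    apply setIntegral_congr_fun measurableSet_Iic
    intro x _; exact (f_even x).symm
  rw [integral_f_Iic, integral_f_Ioi] at h1
  have := sqrt2pi_pos
  field_simp at h1
  linarith

lemma gauss_integral_eq (g : ℝ → ℝ) :
    ∫ x, g x ∂(gaussianReal 0 1) = (∫ x, g x * f x) / Real.sqrt (2 * Real.pi) := by
  rw [gaussianReal_of_var_ne_zero 0 one_ne_zero]
  have hd : gaussianPDF 0 1 = fun x =>
      (((fun y => (gaussianPDFReal 0 1 y).toNNReal) x : ℝ≥0) : ℝ≥0∞) := rfl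
  rw [hd, integral_withDensity_eq_integral_smul
    ((measurable_gaussianPDFReal 0 1).real_toNNReal) g]
  rw [← integral_div]
  congr 1 with x
  have hnn : 0 ≤ gaussianPDFReal 0 1 x := gaussianPDFReal_nonneg 0 1 x
  have heq : gaussianPDFReal 0 1 x = f x / Real.sqrt (2 * Real.pi) := by
    simp only [gaussianPDFReal, NNReal.coe_one, mul_one, sub_zero, f]
    ring
  rw [NNReal.smul_def, Real.coe_toNNReal _ hnn, heq, smul_eq_mul]
  ring

lemma integrable_lin (l t : ℝ) : Integrable (fun x => (l + t * x) * f x) := by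
  have h : (fun x => (l + t * x) * f x) = fun x => l * f x + t * (x * f x) := by
    ext x; ring
  rw [h]
  exact (integrable_f.const_mul l).add (integrable_xf.const_mul t)

lemma integrable_abs_lin (l t : ℝ) : Integrable (fun x => |l + t * x| * f x) := by
  have := (integrable_lin l t).abs
  apply this.congr
  filter_upwards with x
  rw [abs_mul, abs_of_pos (f_pos x)]

lemma key (t l : ℝ) (ht : 0 < t) :
    ∫ x, |l + t * x| ∂(gaussianReal 0 1) =
      l * (2 * Phi (l / t) - 1) + 2 * t * f (l / t) / Real.sqrt (2 * Real.pi) := by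
  rw [gauss_integral_eq]
  set c : ℝ := -(l / t) with hc
  have hsplit := integral_add_compl (measurableSet_Iic (a := c)) (integrable_abs_lin l t)
  rw [compl_Iic] at hsplit
  have hIic : ∫ x in Iic c, |l + t * x| * f x = -(l * (Real.sqrt (2 * Real.pi) * Phi c)) + t * f c := by
    have he : ∀ x ∈ Iic c, |l + t * x| * f x = -(l * f x + t * (x * f x)) := by
      intro x hx
      have hx' : l + t * x ≤ 0 := by
        have : x ≤ -(l/t) := hx
        have := mul_le_mul_of_nonneg_left this ht.le
        rw [mul_neg, mul_div_cancel₀ _ ht.ne'] at this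
        linarith
      rw [abs_of_nonpos hx']
      ring
    rw [setIntegral_congr_fun measurableSet_Iic he, integral_neg, integral_add
      ((integrable_f.const_mul l).integrableOn) ((integrable_xf.const_mul t).integrableOn),
      integral_const_mul, integral_const_mul, integral_f_Iic, integral_xf_Iic]
    ring
  have hIoi : ∫ x in Ioi c, |l + t * x| * f x
      = l * (Real.sqrt (2 * Real.pi) * (1 - Phi c)) + t * f c := by
    have he : ∀ x ∈ Ioi c, |l + t * x| * f x = l * f x + t * (x * f x) := by
      intro x hx
      have hx' : 0 ≤ l + t * x := by
        have : -(l/t) < x := hx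
        have := mul_lt_mul_of_pos_left this ht
        rw [mul_neg, mul_div_cancel₀ _ ht.ne'] at this
        linarith
      rw [abs_of_nonneg hx']
      ring
    rw [setIntegral_congr_fun measurableSet_Ioi he, integral_add
      ((integrable_f.const_mul l).integrableOn) ((integrable_xf.const_mul t).integrableOn),
      integral_const_mul, integral_const_mul, integral_f_Ioi, integral_xf_Ioi]
  rw [hIic, hIoi] at hsplit
  rw [← hsplit]
  have hphi : Phi c = 1 - Phi (l / t) := Phi_neg (l / t)
  have hfc : f c = f (l / t) := f_even (l / t)
  rw [hphi, hfc]
  have hs := sqrt2pi_pos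
  field_simp
  ring



lemma Phi_le_one (c : ℝ) : Phi c ≤ 1 := by
  have h := setIntegral_le_integral (μ := volume) (s := Iic c) integrable_f
    (ae_of_all _ fun x => (f_pos x).le)
  rw [integral_f_Iic, integral_f] at h
  have := sqrt2pi_pos
  nlinarith

lemma hasDerivAt_Phi (x : ℝ) : HasDerivAt Phi (f x / Real.sqrt (2 * Real.pi)) x := by
  have hPhi : ∀ y : ℝ, Phi y = ((∫ s in Iic (0:ℝ), f s) + ∫ s in (0:ℝ)..y, f s) / Real.sqrt (2 * Real.pi) := by
    intro y
    have := intervalIntegral.integral_Iic_sub_Iic (μ := volume) (f := f) (a := (0:ℝ)) (b := y)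
      integrable_f.integrableOn integrable_f.integrableOn
    rw [integral_f_Iic, integral_f_Iic] at this
    rw [integral_f_Iic]
    rw [eq_div_iff sqrt2pi_pos.ne']
    linarith
  have hD : HasDerivAt (fun y => (∫ s in (0:ℝ)..y, f s)) (f x) x := by
    apply intervalIntegral.integral_hasDerivAt_right
      (integrable_f.intervalIntegrable)
      (f_cont.stronglyMeasurable.stronglyMeasurableAtFilter)
      f_cont.continuousAt
  have := ((hD.const_add (∫ s in Iic (0:ℝ), f s)).div_const (Real.sqrt (2 * Real.pi)))
  apply this.congr_of_eventuallyEq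
  filter_upwards with y
  rw [hPhi y]

lemma hasDerivAt_g (x : ℝ) : HasDerivAt g (-2 * (1 - Phi x)) x := by
  have hf' : HasDerivAt f (-(x * f x)) x := by
    have := (hasDerivAt_negf x).neg
    apply this.congr_of_eventuallyEq
    filter_upwards with y
    simp
  have h1 : HasDerivAt (fun y => 2 * f y / Real.sqrt (2 * Real.pi))
      (2 * -(x * f x) / Real.sqrt (2 * Real.pi)) x := (hf'.const_mul 2).div_const _
  have h2 : HasDerivAt (fun y : ℝ => 1 - Phi y) (-(f x / Real.sqrt (2 * Real.pi))) x :=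
    (hasDerivAt_Phi x).const_sub 1
  have h3 : HasDerivAt (fun y : ℝ => y * (1 - Phi y))
      (1 * (1 - Phi x) + x * -(f x / Real.sqrt (2 * Real.pi))) x :=
    (hasDerivAt_id x).mul h2
  have h4 := h1.sub (h3.const_mul 2)
  have : HasDerivAt g (2 * -(x * f x) / Real.sqrt (2 * Real.pi)
      - 2 * (1 * (1 - Phi x) + x * -(f x / Real.sqrt (2 * Real.pi)))) x := h4
  convert this using 1
  have hs := sqrt2pi_pos
  field_simp
  ring

lemma g_mono {a : ℝ} (ha0 : 0 ≤ a) (ha1 : a ≤ 1) : g 1 ≤ g a := by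
  have hanti : AntitoneOn g (Icc (0:ℝ) 1) := by
    apply antitoneOn_of_deriv_nonpos (convex_Icc 0 1)
    · exact fun x _ => ((hasDerivAt_g x).differentiableAt).continuousAt.continuousWithinAt
    · intro x _
      exact ((hasDerivAt_g x).differentiableAt).differentiableWithinAt
    · intro x _
      rw [(hasDerivAt_g x).deriv]
      have := Phi_le_one x
      nlinarith
  exact hanti ⟨ha0, ha1⟩ ⟨zero_le_one, le_rfl⟩ ha1


lemma sqrt2pi_lt : Real.sqrt (2 * Real.pi) ≤ 2.5066283 := by
  have hpi : Real.pi ≤ 3.14159265358979323847 := Real.pi_lt_d20.le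
  rw [Real.sqrt_le_iff]
  constructor
  · norm_num
  · nlinarith

lemma exp_neg_half_lb : (0.60653065 : ℝ) ≤ Real.exp (-(1:ℝ)/2) := by
  have h1 : Real.exp (-(1:ℝ)/2) * Real.exp (-(1:ℝ)/2) = Real.exp (-1) := by
    rw [← Real.exp_add]; norm_num
  have h2 : Real.exp (-1 : ℝ) = (Real.exp 1)⁻¹ := Real.exp_neg 1
  have h3 : Real.exp 1 < 2.7182818286 := Real.exp_one_lt_d9
  have h4 : (0:ℝ) < Real.exp (-(1:ℝ)/2) := Real.exp_pos _
  have h5 : (0:ℝ) < Real.exp 1 := Real.exp_pos _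
  rw [h2] at h1
  have h6 : Real.exp (-(1:ℝ)/2) * Real.exp (-(1:ℝ)/2) * Real.exp 1 = 1 := by
    rw [h1]; field_simp
  by_contra hcon
  push_neg at hcon
  have h7 : Real.exp (-(1:ℝ)/2) * Real.exp (-(1:ℝ)/2) < 0.60653065 * 0.60653065 := by nlinarith
  nlinarith

lemma taylor_lb : ∀ x ∈ Icc (0:ℝ) 1,
    1 - x^2/2 + x^4/8 - x^6/48 + x^8/384 - x^10/3840 - 7*x^12/276480 ≤ f x := by
  intro x hx
  obtain ⟨h0, h1⟩ := hx
  have hx2 : -x^2/2 ≤ 0 := by nlinarith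
  have hb := Real.exp_bound (x := -x^2/2)
    (by rw [abs_of_nonpos hx2]; nlinarith) (by norm_num : 0 < 6)
  have hsum : ∑ m ∈ Finset.range 6, (-x^2/2)^m / (m.factorial : ℝ)
      = 1 - x^2/2 + x^4/8 - x^6/48 + x^8/384 - x^10/3840 := by
    simp [Finset.sum_range_succ, Nat.factorial]
    ring
  rw [hsum, abs_of_nonpos hx2] at hb
  norm_num [Nat.factorial] at hb
  have hb' := (abs_le.1 hb).1
  unfold f
  nlinarith [hb']

lemma poly_int : ∫ x in (0:ℝ)..1,
    (1 - x^2/2 + x^4/8 - x^6/48 + x^8/384 - x^10/3840 - 7*x^12/276480)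
    = 236798621/276756480 := by
  norm_num (maxDischargeDepth := 8) [intervalIntegral.integral_sub, intervalIntegral.integral_add,
    intervalIntegral.integral_div, intervalIntegral.integral_const_mul, integral_pow,
    IntervalIntegrable.add, IntervalIntegrable.sub, _root_.intervalIntegrable_const,
    intervalIntegral.intervalIntegrable_pow, IntervalIntegrable.div_const, IntervalIntegrable.const_mul]

lemma I_lb : (0.8556208 : ℝ) ≤ ∫ x in (0:ℝ)..1, f x := by
  have hmono := intervalIntegral.integral_mono_on (μ := volume) (a := 0) (b := 1)
    zero_le_one
    (Continuous.intervalIntegrable (by fun_prop) 0 1)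
    (f_cont.intervalIntegrable 0 1)
    taylor_lb
  rw [poly_int] at hmono
  apply le_trans _ hmono
  norm_num


lemma Phi_one_eq : Real.sqrt (2 * Real.pi) * Phi 1
    = Real.sqrt (2 * Real.pi) / 2 + ∫ x in (0:ℝ)..1, f x := by
  have h := intervalIntegral.integral_Iic_sub_Iic (μ := volume) (f := f) (a := (0:ℝ)) (b := 1)
    integrable_f.integrableOn integrable_f.integrableOn
  rw [integral_f_Iic, integral_f_Iic] at h
  have h0 : Phi 0 = 1/2 := by
    have := Phi_neg 0
    rw [neg_zero] at this
    linarith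
  rw [h0] at h
  linarith

lemma sqrt_ratio : Real.sqrt (2 / Real.pi) * Real.sqrt (2 * Real.pi) = 2 := by
  rw [← Real.sqrt_mul (by positivity)]
  rw [show 2 / Real.pi * (2 * Real.pi) = 4 by field_simp; ring]
  rw [show (4:ℝ) = 2^2 by norm_num, Real.sqrt_sq (by norm_num)]

lemma g_one_eq : g 1 = Real.sqrt (2 / Real.pi) * Real.exp (-(1:ℝ)/2) - 2 * (1 - Phi 1) := by
  unfold g f
  have hs := sqrt2pi_pos
  have hr := sqrt_ratio
  rw [show -(1:ℝ)^2/2 = -(1:ℝ)/2 by norm_num]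
  have : Real.sqrt (2 / Real.pi) = 2 / Real.sqrt (2 * Real.pi) := by
    field_simp at hr ⊢
    linarith
  rw [this]
  ring

lemma g_one_lb : (0.1666 : ℝ) ≤ g 1 := by
  rw [g_one_eq]
  have hs := sqrt2pi_pos
  have hsl := sqrt2pi_lt
  have hI := I_lb
  have hu := exp_neg_half_lb
  have hphi := Phi_one_eq
  have hr := sqrt_ratio
  have hsr : Real.sqrt (2 / Real.pi) = 2 / Real.sqrt (2 * Real.pi) := by
    field_simp at hr ⊢; linarith
  rw [hsr]
  rw [div_mul_eq_mul_div, ← sub_nonneg]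
  have hexp : (2 : ℝ) * Real.exp (-(1:ℝ)/2) / Real.sqrt (2 * Real.pi) - 2 * (1 - Phi 1) - 0.1666
      = (2 * Real.exp (-(1:ℝ)/2) - (2.1666 * Real.sqrt (2 * Real.pi) - 2 * (Real.sqrt (2 * Real.pi) * Phi 1)))
        / Real.sqrt (2 * Real.pi) := by
    field_simp
    ring
  rw [hexp]
  apply div_nonneg _ hs.le
  rw [hphi]
  nlinarith

theorem stmt_2 (t l : ℝ) (ht : 0 < t) (hl : |l| ≤ t) :
    (∫ x, (|l + t * x| - |l|) ∂(gaussianReal 0 1)) ≥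
        Real.sqrt (2 / Real.pi) * t * Real.exp (-(1 : ℝ) / 2) - 2 * t * (1 - Phi 1) ∧
      Real.sqrt (2 / Real.pi) * t * Real.exp (-(1 : ℝ) / 2) - 2 * t * (1 - Phi 1) ≥
        0.1666 * t := by
  have hs := sqrt2pi_pos
  -- integrability of |l + t x| wrt gaussian
  have hint : Integrable (fun x => |l + t * x|) (gaussianReal 0 1) := by
    rw [gaussianReal_of_var_ne_zero 0 one_ne_zero]
    have hd : gaussianPDF 0 1 = fun x =>
        (((fun y => (gaussianPDFReal 0 1 y).toNNReal) x : ℝ≥0) : ℝ≥0∞) := rfl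
    rw [hd, integrable_withDensity_iff_integrable_coe_smul
      ((measurable_gaussianPDFReal 0 1).real_toNNReal)]
    have : Integrable (fun x => |l + t * x| * f x / Real.sqrt (2 * Real.pi)) :=
      (integrable_abs_lin l t).div_const _
    apply this.congr
    filter_upwards with x
    have hnn : 0 ≤ gaussianPDFReal 0 1 x := gaussianPDFReal_nonneg 0 1 x
    have heq : gaussianPDFReal 0 1 x = f x / Real.sqrt (2 * Real.pi) := by
      simp only [gaussianPDFReal, NNReal.coe_one, mul_one, sub_zero, f]
      ring
    rw [smul_eq_mul, Real.coe_toNNReal _ hnn, heq]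
    ring
  have hsub : (∫ x, (|l + t * x| - |l|) ∂(gaussianReal 0 1))
      = (∫ x, |l + t * x| ∂(gaussianReal 0 1)) - |l| := by
    rw [integral_sub hint (integrable_const _)]
    simp
  -- E = t * g (|l|/t)
  set a : ℝ := |l| / t with ha
  have ha0 : 0 ≤ a := by positivity
  have ha1 : a ≤ 1 := by rw [ha, div_le_one ht]; exact hl
  have hag : (∫ x, (|l + t * x| - |l|) ∂(gaussianReal 0 1)) = t * g a := by
    rw [hsub, key t l ht]
    unfold g
    rcases abs_cases l with ⟨habs, hsign⟩ | ⟨habs, hsign⟩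
    · have hla : l / t = a := by rw [ha, habs]
      rw [hla]
      have hl_eq : l = t * a := by
        rw [ha, habs]; field_simp
      rw [hl_eq]
      field_simp
      rw [abs_of_nonneg (mul_nonneg ht.le ha0)]
      ring
    · have hla : l / t = -a := by rw [ha, habs]; field_simp
      rw [hla, Phi_neg, f_even]
      have hl_eq : l = -(t * a) := by
        rw [ha, habs]; field_simp
      rw [hl_eq]
      field_simp
      rw [abs_neg, abs_of_nonneg (mul_nonneg ht.le ha0)]
      ring
  have hg1 : t * g 1 = Real.sqrt (2 / Real.pi) * t * Real.exp (-(1 : ℝ) / 2) - 2 * t * (1 - Phi 1) := by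
    rw [g_one_eq]; ring
  constructor
  · rw [hag, ← hg1]
    exact mul_le_mul_of_nonneg_left (g_mono ha0 ha1) ht.le
  · rw [← hg1]
    have := g_one_lb
    nlinarith
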